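/- Let Q be the Minkowski quadratic form on ℝ⁴ and B its polarization. Suppose C ∈ ℝ⁴ is timelike, Q(C) > 0, and ξ ∈ ℝ⁴ is not a real scalar multiple of C. Then there exist real numbers t₁ < t₂ < t₃ such that Q(ξ + t·C)·B(C, ξ + t·C) = Q(C)²·(t − t₁)·(t − t₂)·(t − t₃) for all t ∈ ℝ; in particular the cubic polynomial t ↦ Q(ξ + t·C)·B(C, ξ + t·C) has three distinct real roots. (This is the statement that the third-order characteristic polynomial h₂(ξ) = g^{ρμ}C^α ξ_ρ ξ_μ ξ_α of the entropy equation is hyperbolic whenever the current C is timelike with respect to the metric.) -/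

import Mathlib

/-- The Minkowski quadratic form on ℝ⁴ (signature (+,-,-,-)). -/
def minkQ (ξ : Fin 4 → ℝ) : ℝ := ξ 0 ^ 2 - ξ 1 ^ 2 - ξ 2 ^ 2 - ξ 3 ^ 2

/-- The polarization of the Minkowski quadratic form. -/
def minkB (ξ η : Fin 4 → ℝ) : ℝ := ξ 0 * η 0 - ξ 1 * η 1 - ξ 2 * η 2 - ξ 3 * η 3

/-- Reverse Cauchy–Schwarz: a nonzero vector Minkowski-orthogonal to a
timelike vector is spacelike. -/
lemma spacelike_of_orth (C η : Fin 4 → ℝ) (hC : 0 < minkQ C)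
    (horth : minkB C η = 0) (hne : η ≠ 0) : minkQ η < 0 := by
  simp only [minkQ, minkB] at *
  have horth' : C 0 * η 0 = C 1 * η 1 + C 2 * η 2 + C 3 * η 3 := by linarith
  by_cases hs : η 1 = 0 ∧ η 2 = 0 ∧ η 3 = 0
  · obtain ⟨h1, h2, h3⟩ := hs
    have hc0 : C 0 ≠ 0 := by nlinarith [sq_nonneg (C 1), sq_nonneg (C 2), sq_nonneg (C 3)]
    have h0' : C 0 * η 0 = 0 := by rw [horth', h1, h2, h3]; ring
    have h0 : η 0 = 0 := by
      rcases mul_eq_zero.mp h0' with h | h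
      · exact absurd h hc0
      · exact h
    exact absurd (funext fun i => by fin_cases i <;> simp [h0, h1, h2, h3]) hne
  · have hpos : 0 < η 1 ^ 2 + η 2 ^ 2 + η 3 ^ 2 := by
      rcases not_and_or.mp hs with h | h
      · have : 0 < η 1 ^ 2 := by positivity
        nlinarith [sq_nonneg (η 2), sq_nonneg (η 3)]
      · rcases not_and_or.mp h with h | h
        · have : 0 < η 2 ^ 2 := by positivity
          nlinarith [sq_nonneg (η 1), sq_nonneg (η 3)]
        · have : 0 < η 3 ^ 2 := by positivity
          nlinarith [sq_nonneg (η 1), sq_nonneg (η 2)]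
    have hsq : (C 0 * η 0) ^ 2 = (C 1 * η 1 + C 2 * η 2 + C 3 * η 3) ^ 2 := by
      rw [horth']
    nlinarith [hsq, sq_nonneg (C 1 * η 2 - C 2 * η 1), sq_nonneg (C 1 * η 3 - C 3 * η 1),
      sq_nonneg (C 2 * η 3 - C 3 * η 2), mul_pos hC hpos,
      mul_nonneg (sq_nonneg (C 0)) hpos.le, sq_nonneg (C 0), sq_nonneg (η 0)]

/-- The cubic characteristic polynomial `h₂(ξ) = g^{ρμ}C^α ξ_ρ ξ_μ ξ_α` of the entropy
equation is hyperbolic in the direction of a timelike current C: along any line in the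
direction C it factors with three distinct real roots. -/
theorem cubic_entropy_symbol_hyperbolic (C : Fin 4 → ℝ) (hC : 0 < minkQ C)
    (ξ : Fin 4 → ℝ) (hξ : ∀ c : ℝ, ξ ≠ c • C) :
    ∃ t₁ t₂ t₃ : ℝ, t₁ < t₂ ∧ t₂ < t₃ ∧
      ∀ t : ℝ, minkQ (ξ + t • C) * minkB C (ξ + t • C) =
        minkQ C ^ 2 * (t - t₁) * (t - t₂) * (t - t₃) := by
  set a := minkQ C with ha
  set b := minkB C ξ with hb
  set q := minkQ ξ with hq
  simp only [minkQ, minkB] at ha hb hq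
  have ha0 : a ≠ 0 := ne_of_gt hC
  -- the discriminant is positive
  have hdisc : a * q < b ^ 2 := by
    have hη : (a • ξ - b • C) ≠ 0 := by
      intro h
      have : ξ = (b / a) • C := by
        funext i
        have h' := congrFun h i
        simp only [Pi.sub_apply, Pi.smul_apply, smul_eq_mul, Pi.zero_apply] at h'
        simp only [Pi.smul_apply, smul_eq_mul]
        field_simp
        linarith [h']
      exact hξ (b / a) this
    have horth : minkB C (a • ξ - b • C) = 0 := by
      simp only [minkB, Pi.sub_apply, Pi.smul_apply, smul_eq_mul]
      linear_combination b * ha - a * hb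
    have hsp := spacelike_of_orth C _ hC horth hη
    have hQ : minkQ (a • ξ - b • C) = a * (a * q - b ^ 2) := by
      simp only [minkQ, Pi.sub_apply, Pi.smul_apply, smul_eq_mul]
      linear_combination -a ^ 2 * hq + 2 * a * b * hb - b ^ 2 * ha
    rw [hQ] at hsp
    nlinarith
  set D := Real.sqrt (b ^ 2 - a * q) with hD
  have hD0 : 0 < D := Real.sqrt_pos.mpr (by linarith)
  have hD2 : D ^ 2 = b ^ 2 - a * q := Real.sq_sqrt (by linarith)
  refine ⟨(-b - D) / a, -b / a, (-b + D) / a, ?_, ?_, ?_⟩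
  · rw [div_lt_div_iff_of_pos_right hC]; linarith
  · rw [div_lt_div_iff_of_pos_right hC]; linarith
  · intro t
    have h1 : minkQ (ξ + t • C) = q + 2 * b * t + a * t ^ 2 := by
      simp only [minkQ, Pi.add_apply, Pi.smul_apply, smul_eq_mul]
      linear_combination -hq - 2 * t * hb - t ^ 2 * ha
    have h2 : minkB C (ξ + t • C) = b + a * t := by
      simp only [minkB, Pi.add_apply, Pi.smul_apply, smul_eq_mul]
      linear_combination -hb - t * ha
    rw [h1, h2]
    field_simp
    linear_combination (a * t + b) * hD2
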